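/- arXiv:2411.12754 — 2 statements merged into one kernel-verified Lean document; each statement's English description precedes it below -/
import Mathlib

section
/- With h defined from binary digits by h(k) = Σ_{i≥1} β_i 2^{⌊(i−1)/2⌋}, if k and ℓ are both odd natural numbers, then h(k+ℓ) ≤ h(k) + h(ℓ) + 1. -/
/-- `h k = Σ_{i≥1} β_i 2^{⌊(i−1)/2⌋}` where `β_i` are the binary digits of `k`. -/
def h (k : ℕ) : ℕ := ∑ i ∈ Finset.Icc 1 k, if k.testBit i then 2 ^ ((i - 1) / 2) else 0

def g (m : ℕ) : ℕ :=
  if m = 0 then 0 else (m % 4 + 1) / 2 + 2 * g (m / 4)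
decreasing_by exact Nat.div_lt_self (Nat.pos_of_ne_zero (by assumption)) (by norm_num)

lemma g_eq (m : ℕ) : g m = (m % 4 + 1) / 2 + 2 * g (m / 4) := by
  rcases eq_or_ne m 0 with h | h
  · subst h; rw [g]; simp [g]
  · rw [g]; simp [h]

lemma g_one : g 1 = 1 := by
  rw [g_eq]; norm_num
  rw [g]; simp

lemma g_zero : g 0 = 0 := by rw [g]; simp

lemma g_subadd (m n : ℕ) : g (m + n) ≤ g m + g n := by
  suffices H : ∀ N m n, m + n ≤ N → g (m + n) ≤ g m + g n from H (m + n) m n le_rfl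
  intro N
  induction N with
  | zero =>
    intro m n hmn
    have hm : m = 0 := by omega
    have hn : n = 0 := by omega
    subst hm; subst hn; simp [g_zero]
  | succ N ih =>
    intro m n hmn
    rcases Nat.lt_or_ge (m + n) (N + 1) with h' | h'
    · exact ih m n (by omega)
    have hN : m + n = N + 1 := by omega
    obtain ⟨a, r, hr, rfl⟩ : ∃ a r, r < 4 ∧ m = 4 * a + r :=
      ⟨m / 4, m % 4, Nat.mod_lt _ (by norm_num), by omega⟩
    obtain ⟨b, s, hs, rfl⟩ : ∃ b s, s < 4 ∧ n = 4 * b + s :=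
      ⟨n / 4, n % 4, Nat.mod_lt _ (by norm_num), by omega⟩
    rcases Nat.lt_or_ge (r + s) 4 with hrs | hrs
    · rw [g_eq (4 * a + r + (4 * b + s)), g_eq (4 * a + r), g_eq (4 * b + s)]
      have e1 : (4 * a + r + (4 * b + s)) / 4 = a + b := by omega
      have e2 : (4 * a + r) / 4 = a := by omega
      have e3 : (4 * b + s) / 4 = b := by omega
      rw [e1, e2, e3]
      have hab : g (a + b) ≤ g a + g b := ih a b (by omega)
      omega
    · rw [g_eq (4 * a + r + (4 * b + s)), g_eq (4 * a + r), g_eq (4 * b + s)]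
      have e1 : (4 * a + r + (4 * b + s)) / 4 = a + b + 1 := by omega
      have e2 : (4 * a + r) / 4 = a := by omega
      have e3 : (4 * b + s) / 4 = b := by omega
      rw [e1, e2, e3]
      have hab : g (a + b) ≤ g a + g b := ih a b (by omega)
      have hab1 : g (a + b + 1) ≤ g (a + b) + g 1 := ih (a + b) 1 (by omega)
      have hg1 : g 1 = 1 := g_one
      omega

lemma g_sum (n : ℕ) : ∀ m, m < 4 ^ n →
    g m = ∑ i ∈ Finset.range (2 * n), if m.testBit i then 2 ^ (i / 2) else 0 := by
  induction n with
  | zero =>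
    intro m hm
    interval_cases m
    simp [g_zero]
  | succ n ih =>
    intro m hm
    have hdiv : m / 4 < 4 ^ n := by
      rw [Nat.div_lt_iff_lt_mul (by norm_num)]
      calc m < 4 ^ (n + 1) := hm
        _ = 4 ^ n * 4 := by ring
    have key := ih (m / 4) hdiv
    have h2n : 2 * (n + 1) = 2 * n + 1 + 1 := by ring
    rw [h2n, Finset.sum_range_succ', Finset.sum_range_succ']
    -- now RHS = (∑ i ∈ range (2n), f (i+1+1)) + f (0+1) + f 0
    rw [g_eq]
    have hbit : ∀ i, m.testBit (i + 1 + 1) = (m / 4).testBit i := by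
      intro i
      have : m / 4 = m / 2 / 2 := by omega
      rw [this, Nat.testBit_div_two, Nat.testBit_div_two]
    have hsum : ∑ i ∈ Finset.range (2 * n),
        (if m.testBit (i + 1 + 1) then 2 ^ ((i + 1 + 1) / 2) else 0)
        = 2 * ∑ i ∈ Finset.range (2 * n), (if (m / 4).testBit i then 2 ^ (i / 2) else 0) := by
      rw [Finset.mul_sum]
      refine Finset.sum_congr rfl fun i _ => ?_
      rw [hbit i]
      have : (i + 1 + 1) / 2 = i / 2 + 1 := by omega
      rw [this, pow_succ]
      split <;> ring
    rw [hsum, ← key]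
    have hb0 : m.testBit 0 = decide (m % 2 = 1) := by
      rw [Nat.testBit_eq_decide_div_mod_eq]; norm_num
    have hb1 : m.testBit (0 + 1) = decide (m / 2 % 2 = 1) := by
      rw [Nat.testBit_eq_decide_div_mod_eq]
    rw [hb0, hb1]
    have : ((0:ℕ) + 1) / 2 = 0 := by norm_num
    rw [this]
    simp only [pow_zero]
    split_ifs <;> simp_all <;> omega

lemma h_eq_g (k : ℕ) : h k = g (k / 2) := by
  rw [h, ← Finset.Ico_add_one_right_eq_Icc, Finset.sum_Ico_eq_sum_range]
  have hterm : ∀ i, (if k.testBit (1 + i) then 2 ^ ((1 + i - 1) / 2) else 0)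
      = (if (k / 2).testBit i then 2 ^ (i / 2) else 0) := by
    intro i
    rw [Nat.testBit_div_two]
    have : 1 + i - 1 = i := by omega
    rw [this]
    have : 1 + i = i + 1 := by omega
    rw [this]
  have hk1 : k + 1 - 1 = k := by omega
  rw [hk1, Finset.sum_congr rfl fun i _ => hterm i]
  rw [g_sum (k + 1) (k / 2) (by
    calc k / 2 ≤ k := Nat.div_le_self _ _
      _ < 2 ^ k := Nat.lt_two_pow_self (n := k)
      _ ≤ 4 ^ (k + 1) := by
        calc (2:ℕ) ^ k ≤ 4 ^ k := Nat.pow_le_pow_left (by norm_num) k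
          _ ≤ 4 ^ (k + 1) := Nat.pow_le_pow_right (by norm_num) (by omega))]
  refine Finset.sum_subset (by intro i hi; simp at hi ⊢; omega) ?_
  intro i _ hik
  simp only [Finset.mem_range, not_lt] at hik
  have : (k / 2).testBit i = false := by
    apply Nat.testBit_lt_two_pow
    calc k / 2 ≤ k := Nat.div_le_self _ _
      _ < 2 ^ k := Nat.lt_two_pow_self (n := k)
      _ ≤ 2 ^ i := Nat.pow_le_pow_right (by norm_num) hik
  simp [this]

theorem h_add_le_of_odd (k l : ℕ) (hk : Odd k) (hl : Odd l) :
    h (k + l) ≤ h k + h l + 1 := by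
  obtain ⟨a, ha⟩ := hk
  obtain ⟨b, hb⟩ := hl
  rw [h_eq_g, h_eq_g, h_eq_g]
  have e1 : (k + l) / 2 = a + b + 1 := by omega
  have e2 : k / 2 = a := by omega
  have e3 : l / 2 = b := by omega
  rw [e1, e2, e3]
  calc g (a + b + 1) ≤ g (a + b) + g 1 := g_subadd (a + b) 1
    _ ≤ g a + g b + 1 := by
        have := g_subadd a b
        rw [g_one]
        omega
end

section
/- For every odd natural number k ≥ 1, h(k)+1 = 1 + √(k−1)/2 holds if and only if k = 1 or k = 4^a + 1 for some a ≥ 1, where h(k) = Σ_{i≥1} β_i 2^{⌊(i−1)/2⌋}. -/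
/-- Auxiliary sum over `range N` of shifted-bit weights. -/
def G (m N : ℕ) : ℕ := ∑ j ∈ Finset.range N, if m.testBit j then 2 ^ (j / 2) else 0

def Hs (m : ℕ) : ℕ := G m (m + 1)

lemma G_ext {m N : ℕ} (h1 : m < 2 ^ N) : ∀ M, N ≤ M → G m M = G m N := by
  intro M hM
  induction M, hM using Nat.le_induction with
  | base => rfl
  | succ M hM ih =>
    have hb : m.testBit M = false :=
      Nat.testBit_lt_two_pow (lt_of_lt_of_le h1 (Nat.pow_le_pow_right (by norm_num) hM))
    rw [G, Finset.sum_range_succ, hb, ← G, ih]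
    simp

lemma G_eq_Hs {m N : ℕ} (h1 : m < 2 ^ N) : G m N = Hs m := by
  have hm : m < 2 ^ (m + 1) := lt_of_lt_of_le (Nat.lt_two_pow_self (n := m))
    (Nat.pow_le_pow_right (by norm_num) (Nat.le_succ m))
  rw [← G_ext h1 (max N (m+1)) (le_max_left _ _), Hs,
    G_ext hm (max N (m+1)) (le_max_right _ _)]

lemma Hs_zero : Hs 0 = 0 := by simp [Hs, G, Nat.zero_testBit]

lemma Hs_rec (m : ℕ) :
    Hs m = (if m.testBit 0 then 1 else 0) + (if m.testBit 1 then 1 else 0) + 2 * Hs (m / 4) := by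
  have hm2 : m < 2 ^ (2 * m + 2) :=
    lt_of_lt_of_le (Nat.lt_two_pow_self (n := m)) (Nat.pow_le_pow_right (by norm_num) (by omega))
  have hm4 : m / 4 < 2 ^ (2 * m) :=
    lt_of_lt_of_le (Nat.lt_two_pow_self (n := m / 4)) (Nat.pow_le_pow_right (by norm_num) (by omega))
  have key : G m (2 * m + 2) =
      (if m.testBit 0 then 1 else 0) + (if m.testBit 1 then 1 else 0) + 2 * G (m / 4) (2 * m) := by
    rw [G, Finset.sum_range_succ' _ (2 * m + 1), Finset.sum_range_succ' _ (2 * m)]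
    have hbit : ∀ j : ℕ, m.testBit (j + 1 + 1) = (m / 4).testBit j := by
      intro j
      rw [Nat.testBit_add_one, Nat.testBit_add_one, Nat.div_div_eq_div_mul]
    have hterm : ∀ j : ℕ,
        (if m.testBit (j + 1 + 1) then 2 ^ ((j + 1 + 1) / 2) else 0)
          = 2 * (if (m / 4).testBit j then 2 ^ (j / 2) else 0) := by
      intro j
      rw [hbit j]
      have : (j + 1 + 1) / 2 = j / 2 + 1 := by omega
      rw [this, pow_succ]
      split <;> ring
    rw [Finset.sum_congr rfl fun j _ => hterm j, ← Finset.mul_sum, ← G]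
    simp [Nat.pow_zero]
    ring
  rw [← G_eq_Hs hm2, key, G_eq_Hs hm4]

lemma main_ind (m : ℕ) :
    m ≤ 2 * (Hs m) ^ 2 ∧ (2 * (Hs m) ^ 2 = m ↔ m = 0 ∨ ∃ b : ℕ, m = 2 * 4 ^ b) := by
  induction m using Nat.strong_induction_on with
  | _ m ih =>
  rcases Nat.eq_zero_or_pos m with rfl | hm
  · simp [Hs_zero]
  obtain ⟨hineq, hiff⟩ := ih (m / 4) (by omega)
  have hrec := Hs_rec m
  have e0 : (if m.testBit 0 then (1:ℕ) else 0) = m % 2 := by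
    rw [Nat.testBit_zero]
    simp only [decide_eq_true_eq]
    split <;> omega
  have e1 : (if m.testBit 1 then (1:ℕ) else 0) = m / 2 % 2 := by
    rw [Nat.testBit_eq_decide_div_mod_eq]
    simp only [decide_eq_true_eq, pow_one]
    split <;> omega
  rw [e0, e1] at hrec
  set n := m / 4 with hn
  set H := Hs n with hHdef
  set X := H ^ 2 with hX
  have hmn : m = 4 * n + (m / 2 % 2) * 2 + m % 2 := by omega
  have ha : m % 2 = 0 ∨ m % 2 = 1 := by omega
  have hb : m / 2 % 2 = 0 ∨ m / 2 % 2 = 1 := by omega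
  rcases ha with ha | ha <;> rcases hb with hb | hb <;>
    rw [ha, hb] at hrec hmn
  -- case a = 0, b = 0 : m = 4n, Hs m = 2H
  · have hsq : (Hs m) ^ 2 = 4 * X := by rw [hrec]; ring
    constructor
    · rw [hsq]; omega
    rw [hsq]
    constructor
    · intro heq
      have h2 : 2 * X = n := by omega
      rcases hiff.mp h2 with h0 | ⟨b, hb'⟩
      · omega
      · right
        refine ⟨b + 1, ?_⟩
        have : (4:ℕ) ^ (b + 1) = 4 * 4 ^ b := by ring
        omega
    · rintro (h0 | ⟨b, hb'⟩)
      · omega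
      rcases b with _ | b
      · simp at hb'; omega
      have h4 : (4:ℕ) ^ (b + 1) = 4 * 4 ^ b := by ring
      have hn' : n = 2 * 4 ^ b := by omega
      have := hiff.mpr (Or.inr ⟨b, hn'⟩)
      omega
  -- case a = 0, b = 1 : m = 4n + 2, Hs m = 2H + 1
  · have hsq : (Hs m) ^ 2 = 4 * X + 4 * H + 1 := by rw [hrec]; ring
    constructor
    · rw [hsq]; omega
    rw [hsq]
    constructor
    · intro heq
      have hH0 : H = 0 := by nlinarith
      have hX0 : X = 0 := by rw [hX, hH0]; ring
      right; exact ⟨0, by omega⟩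
    · rintro (h0 | ⟨b, hb'⟩)
      · omega
      rcases b with _ | b
      · -- m = 2, n = 0
        simp at hb'
        have hn0 : n = 0 := by omega
        have hH0 : H = 0 := by rw [hHdef, hn0, Hs_zero]
        have hX0 : X = 0 := by rw [hX, hH0]; ring
        omega
      · exfalso
        have h4 : (4:ℕ) ^ (b + 1) = 4 * 4 ^ b := by ring
        omega
  -- case a = 1, b = 0 : m = 4n + 1, parity contradiction on both sides
  · constructor
    · have hsq : (Hs m) ^ 2 = 4 * X + 4 * H + 1 := by rw [hrec]; ring
      rw [hsq]; omega
    constructor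
    · intro heq; exfalso
      have hsq : 2 * (Hs m) ^ 2 = 2 * (4 * X + 4 * H + 1) := by rw [hrec]; ring
      omega
    · rintro (h0 | ⟨b, hb'⟩)
      · omega
      · exfalso
        rcases b with _ | b
        · simp at hb'; omega
        · have h4 : (4:ℕ) ^ (b + 1) = 4 * 4 ^ b := by ring
          omega
  -- case a = 1, b = 1 : m = 4n + 3, parity contradiction
  · constructor
    · have hsq : (Hs m) ^ 2 = 4 * X + 8 * H + 4 := by rw [hrec]; ring
      rw [hsq]; omega
    constructor
    · intro heq; exfalso
      have hsq : 2 * (Hs m) ^ 2 = 2 * (4 * X + 8 * H + 4) := by rw [hrec]; ring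
      omega
    · rintro (h0 | ⟨b, hb'⟩)
      · omega
      · exfalso
        rcases b with _ | b
        · simp at hb'; omega
        · have h4 : (4:ℕ) ^ (b + 1) = 4 * 4 ^ b := by ring
          omega

lemma h_eq_Hs (k : ℕ) : h k = Hs (k / 2) := by
  have step1 : h k = ∑ j ∈ Finset.range k, if k.testBit (1 + j) then 2 ^ ((1 + j - 1) / 2) else 0 := by
    rw [h, ← Finset.Ico_add_one_right_eq_Icc, Finset.sum_Ico_eq_sum_range]
    simp
  have step2 : ∀ j : ℕ, (if k.testBit (1 + j) then (2:ℕ) ^ ((1 + j - 1) / 2) else 0)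
      = (if (k / 2).testBit j then 2 ^ (j / 2) else 0) := by
    intro j
    have h1 : 1 + j = j + 1 := by omega
    have h2 : 1 + j - 1 = j := by omega
    rw [h1, Nat.testBit_add_one]
    norm_num
  rw [step1, Finset.sum_congr rfl fun j _ => step2 j, ← G]
  exact G_eq_Hs (lt_of_lt_of_le (Nat.lt_two_pow_self (n := k / 2)) (Nat.pow_le_pow_right (by norm_num) (by omega)))

lemma real_iff (k : ℕ) (h1 : 1 ≤ k) :
    ((h k : ℝ) + 1 = 1 + Real.sqrt ((k : ℝ) - 1) / 2) ↔ k = 4 * (h k) ^ 2 + 1 := by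
  have hk0 : (0:ℝ) ≤ (k:ℝ) - 1 := by
    have : (1:ℝ) ≤ (k:ℝ) := by exact_mod_cast h1
    linarith
  constructor
  · intro heq
    have hs : Real.sqrt ((k:ℝ) - 1) = 2 * (h k : ℝ) := by linarith
    have hsq : (k:ℝ) - 1 = (2 * (h k : ℝ)) ^ 2 := by
      rw [← hs, Real.sq_sqrt hk0]
    have : (k:ℝ) = 4 * ((h k : ℝ)) ^ 2 + 1 := by nlinarith [hsq]
    exact_mod_cast this
  · intro heq
    have hsq : (k:ℝ) - 1 = (2 * (h k : ℝ)) ^ 2 := by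
      have : (k:ℝ) = 4 * ((h k : ℝ)) ^ 2 + 1 := by exact_mod_cast heq
      nlinarith [this]
    have hs : Real.sqrt ((k:ℝ) - 1) = 2 * (h k : ℝ) := by
      rw [hsq, Real.sqrt_sq (by positivity)]
    rw [hs]; ring

theorem h_min_characterization (k : ℕ) (hk : Odd k) (h1 : 1 ≤ k) :
    ((h k : ℝ) + 1 = 1 + Real.sqrt ((k : ℝ) - 1) / 2) ↔
      (k = 1 ∨ ∃ a : ℕ, 1 ≤ a ∧ k = 4 ^ a + 1) := by
  rw [real_iff k h1]
  have hodd : k % 2 = 1 := Nat.odd_iff.mp hk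
  have hH := h_eq_Hs k
  obtain ⟨hineq, hiff⟩ := main_ind (k / 2)
  set m := k / 2 with hm
  set X := (Hs m) ^ 2 with hX
  have hk2 : k = 2 * m + 1 := by omega
  constructor
  · intro heq
    rw [hH] at heq
    have h2 : 2 * X = m := by omega
    rcases hiff.mp h2 with h0 | ⟨b, hb'⟩
    · left; omega
    · right
      refine ⟨b + 1, by omega, ?_⟩
      have : (4:ℕ) ^ (b + 1) = 4 * 4 ^ b := by ring
      omega
  · rintro (rfl | ⟨a, ha, rfl⟩)
    · have : m = 0 := by omega
      rw [hH, ← hX]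
      have := hiff.mpr (Or.inl this)
      omega
    · rcases a with _ | b
      · omega
      have h4 : (4:ℕ) ^ (b + 1) = 4 * 4 ^ b := by ring
      have hn' : m = 2 * 4 ^ b := by omega
      have := hiff.mpr (Or.inr ⟨b, hn'⟩)
      rw [hH, ← hX]
      omega
end
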